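/- Let M be a finite set of items, let n agents have valuations v_1, …, v_n on subsets of M, and let s be a proper share function: s assigns to each valuation v and each entitlement t ∈ (0,1) a real value s(v, t), and s(v, t) is nondecreasing in t. Call a partition (A_1, …, A_n) of M acceptable for an entitlement vector b if v_j(A_j) ≥ s(v_j, b_j) for every agent j. Suppose b and b' are entitlement vectors with b i-improving b' (b_i > b'_i and b_j ≤ b'_j for all j ≠ i), and suppose that the sets of acceptable allocations for b and for b' are both nonempty. Then there exists an allocation A acceptable for b such that v_i(A_i) ≥ v_i(A'_i) for every allocation A' acceptable for b'. (Every fairness notion based on a proper share is upper monotone.) -/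

import Mathlib

/-- A partition of the items `Fin m` into `n` (possibly empty) bundles. -/
def IsPartition {n m : ℕ} (A : Fin n → Finset (Fin m)) : Prop :=
  (∀ i j, i ≠ j → Disjoint (A i) (A j)) ∧ ∀ e, ∃ i, e ∈ A i

/-- Every fairness notion based on a proper share (a share
function `s(v, t)` nondecreasing in the entitlement `t ∈ (0,1)`) is upper
monotone: if `b` i-improves `b'` and both acceptance sets are nonempty, then
some allocation acceptable for `b` gives agent `i` at least as much value as
every allocation acceptable for `b'`. -/
theorem stmt_8 (n m : ℕ) (v : Fin n → Finset (Fin m) → ℝ)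
    (s : (Finset (Fin m) → ℝ) → ℝ → ℝ)
    (hs : ∀ u : Finset (Fin m) → ℝ, ∀ t t' : ℝ,
      0 < t → t < 1 → 0 < t' → t' < 1 → t ≤ t' → s u t ≤ s u t')
    (b b' : Fin n → ℝ)
    (hb : ∀ j, 0 < b j) (hbsum : ∑ j, b j = 1)
    (hb' : ∀ j, 0 < b' j) (hb'sum : ∑ j, b' j = 1)
    (i : Fin n)
    (himp1 : b' i < b i) (himp2 : ∀ j, j ≠ i → b j ≤ b' j)
    (hne : ∃ A : Fin n → Finset (Fin m),
      IsPartition A ∧ ∀ j, s (v j) (b j) ≤ v j (A j))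
    (hne' : ∃ A' : Fin n → Finset (Fin m),
      IsPartition A' ∧ ∀ j, s (v j) (b' j) ≤ v j (A' j)) :
    ∃ A : Fin n → Finset (Fin m),
      (IsPartition A ∧ ∀ j, s (v j) (b j) ≤ v j (A j)) ∧
      ∀ A' : Fin n → Finset (Fin m),
        (IsPartition A' ∧ ∀ j, s (v j) (b' j) ≤ v j (A' j)) →
        v i (A' i) ≤ v i (A i) := by
  classical
  -- there is an agent other than i
  obtain ⟨k, hki⟩ : ∃ k, k ≠ i := by
    by_contra h
    push_neg at h
    have h1 : ∑ j, b j = b i := by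
      rw [Finset.sum_eq_single i]
      · intro j _ hj; exact absurd (h j) hj
      · intro hi; exact absurd (Finset.mem_univ i) hi
    have h2 : ∑ j, b' j = b' i := by
      rw [Finset.sum_eq_single i]
      · intro j _ hj; exact absurd (h j) hj
      · intro hi; exact absurd (Finset.mem_univ i) hi
    rw [hbsum] at h1; rw [hb'sum] at h2
    linarith
  -- every entitlement is < 1
  have hlt1 : ∀ (c : Fin n → ℝ), (∀ j, 0 < c j) → (∑ j, c j = 1) → ∀ j, c j < 1 := by
    intro c hc hcsum j
    obtain ⟨l, hl⟩ : ∃ l, l ≠ j := by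
      rcases eq_or_ne k j with rfl | h
      · exact ⟨i, Ne.symm hki⟩
      · exact ⟨k, h⟩
    have : c j + c l ≤ ∑ x, c x := by
      have := Finset.sum_le_sum_of_subset_of_nonneg
        (s := {j, l}) (Finset.subset_univ _)
        (fun x _ _ => (hc x).le)
      rwa [Finset.sum_pair (Ne.symm hl)] at this
    have := hc l
    rw [hcsum] at *; linarith
  -- the finite set of acceptable-for-b allocations
  let P : (Fin n → Finset (Fin m)) → Prop :=
    fun A => IsPartition A ∧ ∀ j, s (v j) (b j) ≤ v j (A j)
  obtain ⟨A0, hA0⟩ := hne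
  have hPne : (Finset.univ.filter P).Nonempty :=
    ⟨A0, Finset.mem_filter.mpr ⟨Finset.mem_univ _, hA0⟩⟩
  obtain ⟨A, hAmem, hAmax⟩ :=
    Finset.exists_max_image (Finset.univ.filter P) (fun A => v i (A i)) hPne
  have hAP : P A := (Finset.mem_filter.mp hAmem).2
  refine ⟨A, hAP, ?_⟩
  intro A' hA'
  by_contra hlt
  push_neg at hlt
  -- A' is acceptable for b as well
  have hA'P : P A' := by
    refine ⟨hA'.1, fun j => ?_⟩
    rcases eq_or_ne j i with rfl | hj
    · exact le_trans (hAP.2 j) hlt.le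
    · exact le_trans
        (hs (v j) (b j) (b' j) (hb j) (hlt1 b hb hbsum j) (hb' j)
          (hlt1 b' hb' hb'sum j) (himp2 j hj)) (hA'.2 j)
  have := hAmax A' (Finset.mem_filter.mpr ⟨Finset.mem_univ _, hA'P⟩)
  linarith
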